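/- arXiv:1812.06033 — 2 statements merged into one kernel-verified Lean document; each statement's English description precedes it below -/
import Mathlib

section
/- Newton-type identity for Hall–Littlewood elements: let q be a rational number with q ∉ {0, ±1} (e.g. a prime power). For every partition λ with |λ| = n ≥ 1, Σ_{u=0}^{n−1} (−1)^u Σ_{μ: |μ| = n−u} q^{−n(μ)} (q;q)_{ℓ(μ)−1} ∏_{i≥1} [λ'_i − λ'_{i+1} choose λ'_i − μ'_i]_{1/q} equals (−1)^{n−1} n if λ = (1^n) and equals 0 otherwise. (This is the expansion in the basis {P_λ} of the Hall-algebra identity Σ_{r=0}^{n−1} (−1)^r p_{n−r} * e_r = (−1)^{n−1} n e_n.) -/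
open scoped BigOperators

/-- A partition: a weakly decreasing, finitely supported sequence of
nonnegative integers, indexed from `0` (so `parts 0` is `λ₁`). -/
structure Ptn where
  parts : ℕ → ℕ
  antitone' : Antitone parts
  exists_zero : ∃ N, parts N = 0

namespace Ptn

/-- `|λ| = Σᵢ λᵢ`. -/
noncomputable def size (l : Ptn) : ℕ := ∑ᶠ j, l.parts j

/-- `ℓ(λ)`, the number of nonzero parts. -/
noncomputable def len (l : Ptn) : ℕ := Set.ncard {j | l.parts j ≠ 0}

/-- `n(λ) = Σᵢ (i-1) λᵢ` (with 1-based `i`). -/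
noncomputable def nstat (l : Ptn) : ℕ := ∑ᶠ j, j * l.parts j

/-- `λ'ᵢ = #{j : λⱼ ≥ i}`, the transpose partition (meaningful for `i ≥ 1`). -/
noncomputable def conj (l : Ptn) (i : ℕ) : ℕ := Set.ncard {j | i ≤ l.parts j}

/-- `mᵢ(λ) = #{j : λⱼ = i}` (meaningful for `i ≥ 1`). -/
noncomputable def mult (l : Ptn) (i : ℕ) : ℕ := Set.ncard {j | l.parts j = i}

/-- The partition `(1^n)`. -/
def onePow (n : ℕ) : Ptn where
  parts := fun j => if j < n then 1 else 0
  antitone' := by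
    intro a b hab
    simp only
    split_ifs <;> omega
  exists_zero := ⟨n, by simp⟩

/-- The one-row partition `(n)`. -/
def single (n : ℕ) : Ptn where
  parts := fun j => if j = 0 then n else 0
  antitone' := by
    intro a b hab
    simp only
    split_ifs <;> omega
  exists_zero := ⟨n + 1, by simp⟩

/-- The empty partition. -/
def empty : Ptn := onePow 0

end Ptn

/-- The q-Pochhammer symbol `(x;t)_n = ∏_{i=1}^n (1 - x t^{i-1})`. -/
def qPoch {K : Type*} [CommRing K] (x t : K) (n : ℕ) : K :=
  ∏ i ∈ Finset.range n, (1 - x * t ^ i)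

/-- The Gaussian binomial coefficient `[n choose r]_t`, zero for `r > n`. -/
noncomputable def qBinom {K : Type*} [Field K] (t : K) (n r : ℕ) : K :=
  if r ≤ n then qPoch t t n / (qPoch t t r * qPoch t t (n - r)) else 0

/-- The Gaussian binomial coefficient with integer arguments,
zero outside `0 ≤ r ≤ n`. -/
noncomputable def qBinomZ {K : Type*} [Field K] (t : K) (n r : ℤ) : K :=
  if 0 ≤ r ∧ r ≤ n then
    qPoch t t n.toNat / (qPoch t t r.toNat * qPoch t t (n - r).toNat)
  else 0

/-- `I_λ = ⊕ᵢ k[X]/(X^{λᵢ})`, a module over `k[X]` on which `X` acts nilpotently. -/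
def Imod (k : Type*) [Field k] (l : Ptn) : Type _ :=
  ∀ i : Fin l.len, Polynomial k ⧸ Ideal.span {(Polynomial.X : Polynomial k) ^ l.parts (i : ℕ)}

noncomputable instance (k : Type*) [Field k] (l : Ptn) : AddCommGroup (Imod k l) :=
  inferInstanceAs (AddCommGroup
    (∀ i : Fin l.len, Polynomial k ⧸ Ideal.span {(Polynomial.X : Polynomial k) ^ l.parts (i : ℕ)}))

noncomputable instance (k : Type*) [Field k] (l : Ptn) : Module (Polynomial k) (Imod k l) :=
  inferInstanceAs (Module (Polynomial k)
    (∀ i : Fin l.len, Polynomial k ⧸ Ideal.span {(Polynomial.X : Polynomial k) ^ l.parts (i : ℕ)}))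

/-- The Hall number `g^λ_{μ,ν}`: the number of `k[X]`-submodules `N ⊆ I_λ` with
`N ≅ I_ν` and `I_λ/N ≅ I_μ`. -/
noncomputable def hallNum (k : Type*) [Field k] (l m n : Ptn) : ℕ :=
  Nat.card {N : Submodule (Polynomial k) (Imod k l) //
    Nonempty ((↥N) ≃ₗ[Polynomial k] Imod k n) ∧
    Nonempty ((Imod k l ⧸ N) ≃ₗ[Polynomial k] Imod k m)}

/-- `a_λ`, the number of `k[X]`-module automorphisms of `I_λ`. -/
noncomputable def aut (k : Type*) [Field k] (l : Ptn) : ℕ :=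
  Nat.card (Imod k l ≃ₗ[Polynomial k] Imod k l)


/-! ### Auxiliary machinery -/

namespace NewtonAux

/-- `tri m = 0 + 1 + ⋯ + (m-1)`. -/
def tri (m : ℕ) : ℕ := ∑ i ∈ Finset.range m, i

lemma tri_succ (m : ℕ) : tri (m+1) = tri m + m := Finset.sum_range_succ _ _

lemma mem_iff_lt_ncard {S : Set ℕ} (hfin : S.Finite)
    (hdc : ∀ a b : ℕ, a ≤ b → b ∈ S → a ∈ S) (j : ℕ) :
    j ∈ S ↔ j < S.ncard := by
  rw [Set.ncard_eq_toFinset_card _ hfin]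
  constructor
  · intro hj
    have h1 : (Finset.range (j+1) : Finset ℕ) ⊆ hfin.toFinset := by
      intro x hx
      simp only [Finset.mem_range] at hx
      simp only [Set.Finite.mem_toFinset]
      exact hdc x j (by omega) hj
    have := Finset.card_le_card h1
    simpa using this
  · intro hj
    by_contra hjS
    have h2 : hfin.toFinset ⊆ Finset.range j := by
      intro x hx
      simp only [Set.Finite.mem_toFinset] at hx
      simp only [Finset.mem_range]
      by_contra hxj
      exact hjS (hdc j x (by omega) hx)
    have := Finset.card_le_card h2
    simp at this
    omega

end NewtonAux

namespace Ptn
open NewtonAux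

variable (l : Ptn)

lemma parts_le (j : ℕ) : l.parts j ≤ l.parts 0 := l.antitone' (Nat.zero_le j)

lemma parts_eventually_zero : ∃ N, ∀ j, N ≤ j → l.parts j = 0 := by
  obtain ⟨N, hN⟩ := l.exists_zero
  exact ⟨N, fun j hj => Nat.le_antisymm (hN ▸ l.antitone' hj) (Nat.zero_le _)⟩

lemma conjSet_finite {i : ℕ} (hi : 1 ≤ i) : {j | i ≤ l.parts j}.Finite := by
  obtain ⟨N, hN⟩ := l.parts_eventually_zero
  apply Set.Finite.subset (Set.finite_Iio N)
  intro j hj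
  simp only [Set.mem_setOf_eq] at hj
  simp only [Set.mem_Iio]
  by_contra h
  have := hN j (by omega)
  omega

lemma lt_conj_iff (i j : ℕ) : j < l.conj (i+1) ↔ i + 1 ≤ l.parts j := by
  rw [Ptn.conj]
  exact (NewtonAux.mem_iff_lt_ncard (l.conjSet_finite (by omega))
    (fun a b hab hb => le_trans hb (l.antitone' hab)) j).symm

lemma conj_eq_zero {i : ℕ} (hi : l.parts 0 < i) : l.conj i = 0 := by
  rw [Ptn.conj]
  convert Set.ncard_empty ℕ
  ext j
  simp only [Set.mem_setOf_eq, Set.mem_empty_iff_false, iff_false]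
  have := l.parts_le j
  omega

lemma parts_le_of_conj_zero {M j : ℕ} (h : l.conj (M+1) = 0) : l.parts j ≤ M := by
  by_contra hc
  have := (l.lt_conj_iff M j).2 (by omega)
  omega

lemma ptn_ext {a b : Ptn} (h : a.parts = b.parts) : a = b := by
  cases a; cases b; simp_all

lemma conj_ext {a b : Ptn} (h : ∀ i, a.conj (i+1) = b.conj (i+1)) : a = b := by
  apply ptn_ext
  funext j
  have key : ∀ i, i + 1 ≤ a.parts j ↔ i + 1 ≤ b.parts j := fun i => by
    rw [← a.lt_conj_iff, ← b.lt_conj_iff, h i]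
  rcases Nat.eq_zero_or_pos (a.parts j) with h0 | h0
  · rcases Nat.eq_zero_or_pos (b.parts j) with h1 | h1
    · omega
    · have := (key (b.parts j - 1)).2 (by omega); omega
  · have h2 := (key (a.parts j - 1)).1 (by omega)
    rcases Nat.eq_zero_or_pos (b.parts j) with h1 | h1
    · omega
    · have := (key (b.parts j - 1)).2 (by omega); omega

lemma size_eq_sum_conj {M : ℕ} (hM : ∀ i, M ≤ i → l.conj (i+1) = 0) :
    l.size = ∑ i ∈ Finset.range M, l.conj (i+1) := by
  obtain ⟨N, hN⟩ := l.parts_eventually_zero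
  have hpM : ∀ j, l.parts j ≤ M := fun j => l.parts_le_of_conj_zero (hM M le_rfl)
  have hsupp : Function.support l.parts ⊆ ↑(Finset.range N) := by
    intro j hj
    simp only [Function.mem_support] at hj
    simp only [Finset.coe_range, Set.mem_Iio]
    by_contra h
    exact hj (hN j (by omega))
  have hconjN : ∀ i, l.conj (i+1) ≤ N := by
    intro i
    by_contra h
    have h1 := (l.lt_conj_iff i N).1 (by omega)
    have := hN N le_rfl
    omega
  rw [Ptn.size, finsum_eq_sum_of_support_subset _ hsupp]
  have step1 : ∀ j, l.parts j = ∑ i ∈ Finset.range M, (if i + 1 ≤ l.parts j then 1 else 0) := by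
    intro j
    rw [Finset.sum_ite, Finset.sum_const_zero, add_zero, Finset.sum_const, smul_eq_mul, mul_one]
    have : Finset.filter (fun i => i + 1 ≤ l.parts j) (Finset.range M)
        = Finset.range (l.parts j) := by
      ext i
      simp only [Finset.mem_filter, Finset.mem_range]
      have := hpM j
      omega
    rw [this, Finset.card_range]
  calc ∑ j ∈ Finset.range N, l.parts j
      = ∑ j ∈ Finset.range N, ∑ i ∈ Finset.range M, (if i + 1 ≤ l.parts j then 1 else 0) := by
        exact Finset.sum_congr rfl fun j _ => step1 j
    _ = ∑ i ∈ Finset.range M, ∑ j ∈ Finset.range N, (if i + 1 ≤ l.parts j then 1 else 0) :=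
        Finset.sum_comm
    _ = ∑ i ∈ Finset.range M, l.conj (i+1) := by
        apply Finset.sum_congr rfl
        intro i _
        rw [Finset.sum_ite, Finset.sum_const_zero, add_zero, Finset.sum_const, smul_eq_mul,
          mul_one]
        have : Finset.filter (fun j => i + 1 ≤ l.parts j) (Finset.range N)
            = Finset.range (l.conj (i+1)) := by
          ext j
          simp only [Finset.mem_filter, Finset.mem_range]
          constructor
          · intro ⟨_, h2⟩; exact (l.lt_conj_iff i j).2 h2
          · intro h
            have h2 := (l.lt_conj_iff i j).1 h
            have := hconjN i
            exact ⟨by omega, h2⟩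
        rw [this, Finset.card_range]

lemma nstat_eq_sum_tri {M : ℕ} (hM : ∀ i, M ≤ i → l.conj (i+1) = 0) :
    l.nstat = ∑ i ∈ Finset.range M, tri (l.conj (i+1)) := by
  obtain ⟨N, hN⟩ := l.parts_eventually_zero
  have hpM : ∀ j, l.parts j ≤ M := fun j => l.parts_le_of_conj_zero (hM M le_rfl)
  have hsupp : Function.support (fun j => j * l.parts j) ⊆ ↑(Finset.range N) := by
    intro j hj
    simp only [Function.mem_support] at hj
    simp only [Finset.coe_range, Set.mem_Iio]
    by_contra h
    exact hj (by rw [hN j (by omega)]; ring)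
  have hconjN : ∀ i, l.conj (i+1) ≤ N := by
    intro i
    by_contra h
    have h1 := (l.lt_conj_iff i N).1 (by omega)
    have := hN N le_rfl
    omega
  rw [Ptn.nstat, finsum_eq_sum_of_support_subset _ hsupp]
  have step1 : ∀ j, j * l.parts j
      = ∑ i ∈ Finset.range M, (if i + 1 ≤ l.parts j then j else 0) := by
    intro j
    rw [Finset.sum_ite, Finset.sum_const_zero, add_zero, Finset.sum_const]
    have : Finset.filter (fun i => i + 1 ≤ l.parts j) (Finset.range M)
        = Finset.range (l.parts j) := by
      ext i
      simp only [Finset.mem_filter, Finset.mem_range]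
      have := hpM j
      omega
    rw [this, Finset.card_range, smul_eq_mul, mul_comm]
  calc ∑ j ∈ Finset.range N, j * l.parts j
      = ∑ j ∈ Finset.range N, ∑ i ∈ Finset.range M, (if i + 1 ≤ l.parts j then j else 0) := by
        exact Finset.sum_congr rfl fun j _ => step1 j
    _ = ∑ i ∈ Finset.range M, ∑ j ∈ Finset.range N, (if i + 1 ≤ l.parts j then j else 0) :=
        Finset.sum_comm
    _ = ∑ i ∈ Finset.range M, tri (l.conj (i+1)) := by
        apply Finset.sum_congr rfl
        intro i _
        rw [Finset.sum_ite, Finset.sum_const_zero, add_zero]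
        have : Finset.filter (fun j => i + 1 ≤ l.parts j) (Finset.range N)
            = Finset.range (l.conj (i+1)) := by
          ext j
          simp only [Finset.mem_filter, Finset.mem_range]
          constructor
          · intro ⟨_, h2⟩; exact (l.lt_conj_iff i j).2 h2
          · intro h
            have h2 := (l.lt_conj_iff i j).1 h
            have := hconjN i
            exact ⟨by omega, h2⟩
        rw [this]
        rfl

lemma len_eq_conj_one : l.len = l.conj 1 := by
  rw [Ptn.len, Ptn.conj]
  congr 1
  ext j
  simp only [Set.mem_setOf_eq]
  omega

end Ptn

namespace NewtonAux
open Finset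

/-! ### q-series lemmas -/

lemma qPoch_zero' (x t : ℚ) : qPoch x t 0 = 1 := rfl

lemma qPoch_succ' (x t : ℚ) (n : ℕ) : qPoch x t (n+1) = qPoch x t n * (1 - x * t^n) :=
  Finset.prod_range_succ _ _

lemma qPoch_tt_succ (t : ℚ) (n : ℕ) : qPoch t t (n+1) = qPoch t t n * (1 - t^(n+1)) := by
  rw [qPoch_succ', pow_succ, mul_comm (t^n) t]

lemma rat_pow_ne_one {q : ℚ} (hq1 : q ≠ 1) (hqm1 : q ≠ -1)
    {m : ℕ} (hm : 1 ≤ m) : q ^ m ≠ 1 := by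
  intro h
  have habs : |q| ^ m = 1 := by
    rw [← abs_pow, h, abs_one]
  rcases lt_trichotomy |q| 1 with hlt | heq | hgt
  · have : |q| ^ m < 1 := pow_lt_one₀ (abs_nonneg q) hlt (by omega)
    linarith
  · rcases (abs_eq (by norm_num : (0:ℚ) ≤ 1)).1 heq with h' | h' <;> simp_all
  · have : 1 < |q| ^ m := one_lt_pow₀ hgt (by omega)
    linarith

lemma inv_pow_ne_one {q : ℚ} (hq1 : q ≠ 1) (hqm1 : q ≠ -1)
    {m : ℕ} (hm : 1 ≤ m) : (q⁻¹) ^ m ≠ 1 := by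
  rw [inv_pow]
  intro h
  exact rat_pow_ne_one hq1 hqm1 hm (by
    have := congrArg (·⁻¹) h
    simpa using this)

section
variable {t : ℚ} (ht : ∀ m : ℕ, 1 ≤ m → t ^ m ≠ 1)
include ht

lemma qPoch_ne_zero (n : ℕ) : qPoch t t n ≠ 0 := by
  rw [qPoch]
  apply Finset.prod_ne_zero_iff.2
  intro i _
  intro hzero
  apply ht (i+1) (by omega)
  rw [pow_succ, mul_comm]
  linarith

end

section
variable {t : ℚ} (ht : ∀ n : ℕ, qPoch t t n ≠ 0)
include ht

lemma qBinom_zero_right (n : ℕ) : qBinom t n 0 = 1 := by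
  rw [qBinom, if_pos (Nat.zero_le n)]
  simp only [Nat.sub_zero, qPoch_zero', one_mul]
  exact div_self (ht n)

lemma qBinom_self (n : ℕ) : qBinom t n n = 1 := by
  rw [qBinom, if_pos le_rfl]
  simp only [Nat.sub_self, qPoch_zero', mul_one]
  exact div_self (ht n)

omit ht in
lemma qBinom_of_gt {n r : ℕ} (h : n < r) : qBinom t n r = 0 := by
  rw [qBinom, if_neg (by omega)]

lemma qBinom_pascal (n k : ℕ) (hk : k ≤ n) :
    qBinom t (n+1) (k+1) = qBinom t n k + t^(k+1) * qBinom t n (k+1) := by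
  rcases eq_or_lt_of_le hk with rfl | hlt
  · rw [qBinom_self ht, qBinom_self ht, qBinom_of_gt (by omega)]
    ring
  · obtain ⟨a, rfl⟩ : ∃ a, n = k + a + 1 := ⟨n - k - 1, by omega⟩
    rw [qBinom, if_pos (by omega), qBinom, if_pos (by omega), qBinom, if_pos (by omega)]
    have e1 : k + a + 1 + 1 - (k + 1) = a + 1 := by omega
    have e2 : k + a + 1 - k = a + 1 := by omega
    have e3 : k + a + 1 - (k + 1) = a := by omega
    rw [e1, e2, e3]
    rw [qPoch_tt_succ t (k+a+1), qPoch_tt_succ t (k+a), qPoch_tt_succ t k, qPoch_tt_succ t a]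
    have h1 := ht k
    have h2 := ht a
    have h3 := ht (k+a)
    have h4 : (1 - t^(k+1)) ≠ 0 := by
      have := ht (k+1); rw [qPoch_tt_succ] at this
      intro hz; rw [hz] at this; simp at this
    have h5 : (1 - t^(a+1)) ≠ 0 := by
      have := ht (a+1); rw [qPoch_tt_succ] at this
      intro hz; rw [hz] at this; simp at this
    field_simp
    ring

/-- Identity #1: alternating sum of q-binomials vanishes. -/
lemma alt_qbinom_sum (b : ℕ) :
    ∑ v ∈ Finset.range (b+2), (-1:ℚ)^v * t^(tri v) * qBinom t (b+1) v = 0 := by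
  set g : ℕ → ℚ := fun w => (-1:ℚ)^w * t^(tri w + w) * qBinom t b w with hg
  have hX : ∑ v ∈ Finset.range (b+2), (-1:ℚ)^v * t^(tri v) * qBinom t (b+1) v
      = 1 + (∑ v ∈ Finset.range (b+1), (g (v+1) - g v)) := by
    rw [Finset.sum_range_succ' _ (b+1)]
    rw [add_comm]
    congr 1
    · simp only [pow_zero, tri, Finset.range_zero, Finset.sum_empty, one_mul,
        qBinom_zero_right ht]
    · apply Finset.sum_congr rfl
      intro v hv
      simp only [Finset.mem_range] at hv
      rw [qBinom_pascal ht b v (by omega)]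
      simp only [hg, tri_succ]
      ring
  rw [hX, Finset.sum_range_sub g (b+1)]
  have hgb : g (b+1) = 0 := by
    simp only [hg, qBinom_of_gt (show b < b + 1 by omega), mul_zero]
  have hg0 : g 0 = 1 := by
    simp only [hg, pow_zero, tri, Finset.range_zero, Finset.sum_empty, one_mul,
      qBinom_zero_right ht]
    norm_num
  rw [hgb, hg0]
  ring

/-- Identity #2: Newton-type evaluation. -/
lemma newton_scalar (n : ℕ) :
    ∑ j ∈ Finset.range n, qPoch t t j * qBinom t n (j+1) = (n : ℚ) := by
  induction n with
  | zero => simp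
  | succ n ih =>
    have step : ∀ j ∈ Finset.range (n+1),
        qPoch t t j * qBinom t (n+1) (j+1)
          = qPoch t t j * qBinom t n j + t^(j+1) * qPoch t t j * qBinom t n (j+1) := by
      intro j hj
      simp only [Finset.mem_range] at hj
      rw [qBinom_pascal ht n j (by omega)]
      ring
    rw [Finset.sum_congr rfl step, Finset.sum_add_distrib]
    have h1 : ∑ j ∈ Finset.range (n+1), qPoch t t j * qBinom t n j
        = 1 + ∑ j ∈ Finset.range n, qPoch t t (j+1) * qBinom t n (j+1) := by
      rw [Finset.sum_range_succ' _ n]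
      rw [add_comm]
      congr 1
      simp [qPoch_zero', qBinom_zero_right ht]
    have h2 : ∑ j ∈ Finset.range (n+1), t^(j+1) * qPoch t t j * qBinom t n (j+1)
        = ∑ j ∈ Finset.range n, t^(j+1) * qPoch t t j * qBinom t n (j+1) := by
      rw [Finset.sum_range_succ]
      rw [qBinom_of_gt (show n < n + 1 by omega)]
      ring
    rw [h1, h2, add_assoc, ← Finset.sum_add_distrib]
    have h3 : ∀ j ∈ Finset.range n,
        qPoch t t (j+1) * qBinom t n (j+1) + t^(j+1) * qPoch t t j * qBinom t n (j+1)
          = qPoch t t j * qBinom t n (j+1) := by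
      intro j _
      rw [qPoch_tt_succ]
      ring
    rw [Finset.sum_congr rfl h3, ih]
    push_cast
    ring

end

lemma qBinomZ_eq_qBinom (t : ℚ) {a v : ℕ} (h : v ≤ a) :
    qBinomZ t (a:ℤ) ((a:ℤ) - (v:ℤ)) = qBinom t a v := by
  rw [qBinomZ, qBinom, if_pos (by omega), if_pos h]
  have e1 : ((a:ℤ)).toNat = a := rfl
  have e2 : ((a:ℤ) - (v:ℤ)).toNat = a - v := by omega
  have e3 : ((a:ℤ) - ((a:ℤ) - (v:ℤ))).toNat = v := by omega
  rw [e1, e2, e3, mul_comm]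

lemma qBinomZ_zero_zero (t : ℚ) : qBinomZ t 0 0 = 1 := by
  rw [qBinomZ, if_pos ⟨le_rfl, le_rfl⟩]
  norm_num [qPoch_zero']

lemma qBinomZ_eq_zero (t : ℚ) {A R : ℤ} (h : ¬(0 ≤ R ∧ R ≤ A)) : qBinomZ t A R = 0 :=
  if_neg h

lemma zpow_neg_natCast (q : ℚ) (m : ℕ) : q ^ (-(m:ℤ)) = (q⁻¹) ^ m := by
  rw [zpow_neg, zpow_natCast, inv_pow]

lemma neg_one_pow_sub {n s : ℕ} (h : s ≤ n) : (-1:ℚ)^(n-s) = (-1)^n * (-1)^s := by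
  have h1 : (-1:ℚ)^(n-s) * ((-1:ℚ)^s * (-1:ℚ)^s) = (-1:ℚ)^(n-s) * 1 := by
    rw [← pow_add, ← two_mul, pow_mul]
    norm_num
  calc (-1:ℚ)^(n-s) = (-1:ℚ)^(n-s) * (-1:ℚ)^s * (-1:ℚ)^s := by
        rw [mul_assoc, h1, mul_one]
    _ = (-1:ℚ)^((n-s)+s) * (-1:ℚ)^s := by rw [pow_add]
    _ = (-1)^n * (-1)^s := by rw [show n - s + s = n by omega]

lemma q_pow_neg_tri (q : ℚ) (hq0 : q ≠ 0) (m : ℕ) :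
    q ^ (-(tri (m+1) : ℤ)) * qPoch q q m = (-1:ℚ)^m * qPoch q⁻¹ q⁻¹ m := by
  have htri : tri (m+1) = ∑ i ∈ Finset.range m, (i+1) := by
    rw [tri, Finset.sum_range_succ' _ m]
    simp
  rw [htri, zpow_neg_natCast, ← Finset.prod_pow_eq_pow_sum, qPoch, Finset.prod_mul_distrib.symm]
  rw [show (-1:ℚ)^m * qPoch q⁻¹ q⁻¹ m
      = ∏ i ∈ Finset.range m, (-(1 - q⁻¹ * (q⁻¹)^i)) from ?_]
  · apply Finset.prod_congr rfl
    intro i _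
    have hqi : q ^ (i+1) ≠ 0 := pow_ne_zero _ hq0
    have : (q⁻¹)^(i+1) * (1 - q * q^i) = (q⁻¹)^(i+1) - 1 := by
      rw [← pow_succ']
      rw [mul_sub, mul_one, ← mul_pow, inv_mul_cancel₀ hq0, one_pow]
    rw [this, pow_succ']
    ring
  · rw [qPoch]
    rw [show (∏ i ∈ Finset.range m, (-(1 - q⁻¹ * q⁻¹ ^ i)))
        = ∏ i ∈ Finset.range m, ((-1) * (1 - q⁻¹ * q⁻¹ ^ i)) from
      Finset.prod_congr rfl (fun i _ => by ring)]
    rw [Finset.prod_mul_distrib, Finset.prod_const, Finset.card_range]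

/-! ### The coefficient function and partitions from conjugate data -/

noncomputable def Tf (q : ℚ) (lam mu : Ptn) : ℚ :=
  q ^ (-(mu.nstat : ℤ)) * qPoch q q (mu.len - 1) *
    ∏ᶠ i : ℕ, qBinomZ q⁻¹
      ((lam.conj (i + 1) : ℤ) - (lam.conj (i + 2) : ℤ))
      ((lam.conj (i + 1) : ℤ) - (mu.conj (i + 1) : ℤ))

noncomputable def fac (q : ℚ) (lam mu : Ptn) (i : ℕ) : ℚ :=
  qBinomZ q⁻¹ ((lam.conj (i + 1) : ℤ) - (lam.conj (i + 2) : ℤ))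
    ((lam.conj (i + 1) : ℤ) - (mu.conj (i + 1) : ℤ))

lemma fac_eq_one (q : ℚ) (lam mu : Ptn) {i : ℕ}
    (h1 : lam.parts 0 ≤ i) (h2 : mu.parts 0 ≤ i) : fac q lam mu i = 1 := by
  rw [fac, lam.conj_eq_zero (show lam.parts 0 < i + 1 by omega),
    lam.conj_eq_zero (show lam.parts 0 < i + 2 by omega),
    mu.conj_eq_zero (show mu.parts 0 < i + 1 by omega)]
  simpa using qBinomZ_zero_zero q⁻¹

lemma Tf_eq_prod (q : ℚ) (lam mu : Ptn) {B : ℕ}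
    (h1 : lam.parts 0 ≤ B) (h2 : mu.parts 0 ≤ B) :
    Tf q lam mu = q ^ (-(mu.nstat : ℤ)) * qPoch q q (mu.len - 1) *
      ∏ i ∈ Finset.range B, fac q lam mu i := by
  rw [Tf]
  congr 1
  apply finprod_eq_prod_of_mulSupport_subset (fac q lam mu)
  intro i hi
  simp only [Function.mem_mulSupport] at hi
  simp only [Finset.coe_range, Set.mem_Iio]
  by_contra h
  exact hi (fac_eq_one q lam mu (by omega) (by omega))

lemma Tf_eq_zero_of_bad (q : ℚ) (lam mu : Ptn)
    (hbad : ∃ i, ¬(lam.conj (i+2) ≤ mu.conj (i+1) ∧ mu.conj (i+1) ≤ lam.conj (i+1))) :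
    Tf q lam mu = 0 := by
  obtain ⟨i, hi⟩ := hbad
  have hiB : i < max (lam.parts 0) (mu.parts 0) + 1 := by
    by_contra h
    apply hi
    rw [lam.conj_eq_zero (show lam.parts 0 < i + 1 by omega),
      lam.conj_eq_zero (show lam.parts 0 < i + 2 by omega),
      mu.conj_eq_zero (show mu.parts 0 < i + 1 by omega)]
    omega
  rw [Tf_eq_prod q lam mu (B := max (lam.parts 0) (mu.parts 0) + 1) (by omega) (by omega)]
  rw [Finset.prod_eq_zero (Finset.mem_range.2 hiB), mul_zero]
  rw [fac]
  apply qBinomZ_eq_zero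
  push_neg
  intro h0
  have : mu.conj (i+1) ≤ lam.conj (i+1) := by omega
  omega

noncomputable def ofConj (c : ℕ → ℕ) (L : ℕ) (hL : ∀ i, L ≤ i → c i = 0) : Ptn where
  parts := fun j => Set.ncard {i | j < c i}
  antitone' := by
    intro a b hab
    apply Set.ncard_le_ncard
    · intro i hi
      simp only [Set.mem_setOf_eq] at hi ⊢
      omega
    · apply Set.Finite.subset (Set.finite_Iio L)
      intro i hi
      simp only [Set.mem_setOf_eq] at hi
      simp only [Set.mem_Iio]
      by_contra h
      have := hL i (by omega)
      omega
  exists_zero := by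
    refine ⟨(Finset.range L).sup c, ?_⟩
    convert Set.ncard_empty ℕ
    ext i
    simp only [Set.mem_setOf_eq, Set.mem_empty_iff_false, iff_false]
    intro h
    rcases lt_or_ge i L with hi | hi
    · have := Finset.le_sup (f := c) (Finset.mem_range.2 hi)
      omega
    · rw [hL i hi] at h
      omega

variable {c : ℕ → ℕ} {L : ℕ} {hL : ∀ i, L ≤ i → c i = 0}

lemma ofConj_parts_iff (hc : Antitone c) (i j : ℕ) :
    i + 1 ≤ (ofConj c L hL).parts j ↔ j < c i := by
  have hfin : {i' | j < c i'}.Finite := by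
    apply Set.Finite.subset (Set.finite_Iio L)
    intro i' hi'
    simp only [Set.mem_setOf_eq] at hi'
    simp only [Set.mem_Iio]
    by_contra h
    have := hL i' (by omega)
    omega
  have hdc : ∀ a b : ℕ, a ≤ b → b ∈ {i' | j < c i'} → a ∈ {i' | j < c i'} := by
    intro a b hab hb
    simp only [Set.mem_setOf_eq] at hb ⊢
    have := hc hab
    omega
  have := mem_iff_lt_ncard hfin hdc i
  simp only [Set.mem_setOf_eq] at this
  rw [show (ofConj c L hL).parts j = {i' | j < c i'}.ncard from rfl]
  omega

lemma ofConj_conj (hc : Antitone c) (i : ℕ) : (ofConj c L hL).conj (i+1) = c i := by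
  rw [Ptn.conj]
  have h1 : {j | i + 1 ≤ (ofConj c L hL).parts j} = {j | j < c i} := by
    ext j
    simp only [Set.mem_setOf_eq]
    exact ofConj_parts_iff hc i j
  rw [h1]
  have h2 : {j | j < c i} = ↑(Finset.range (c i)) := by
    ext j; simp
  rw [h2, Set.ncard_coe_finset, Finset.card_range]

lemma ofConj_parts0_le : (ofConj c L hL).parts 0 ≤ L := by
  rw [show (ofConj c L hL).parts 0 = {i | 0 < c i}.ncard from rfl]
  have h1 : {i | 0 < c i} ⊆ ↑(Finset.range L) := by
    intro i hi
    simp only [Set.mem_setOf_eq] at hi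
    simp only [Finset.coe_range, Set.mem_Iio]
    by_contra h
    have := hL i (by omega)
    omega
  calc {i | 0 < c i}.ncard ≤ (↑(Finset.range L) : Set ℕ).ncard :=
        Set.ncard_le_ncard h1 (Finset.finite_toSet _)
    _ = L := by rw [Set.ncard_coe_finset, Finset.card_range]

/-! ### Tuples and the partitions they generate -/

def cextOf (L : ℕ) (g : Fin L → ℕ) : ℕ → ℕ := fun i => if h : i < L then g ⟨i, h⟩ else 0

lemma cextOf_of_lt (L : ℕ) (g : Fin L → ℕ) {i : ℕ} (h : i < L) :
    cextOf L g i = g ⟨i, h⟩ := dif_pos h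

lemma cextOf_of_ge (L : ℕ) (g : Fin L → ℕ) {i : ℕ} (h : L ≤ i) :
    cextOf L g i = 0 := dif_neg (by omega)

noncomputable def muOf (L : ℕ) (g : Fin L → ℕ) : Ptn :=
  ofConj (cextOf L g) L (fun i hi => cextOf_of_ge L g hi)

/-- the interlacing condition for a tuple. -/
def goodg (lam : Ptn) (g : Fin (lam.parts 0) → ℕ) : Prop :=
  ∀ i : Fin (lam.parts 0), lam.conj ((i:ℕ)+2) ≤ g i ∧ g i ≤ lam.conj ((i:ℕ)+1)

lemma cext_anti {lam : Ptn} {g : Fin (lam.parts 0) → ℕ} (hg : goodg lam g) :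
    Antitone (cextOf (lam.parts 0) g) := by
  apply antitone_nat_of_succ_le
  intro i
  by_cases h1 : i + 1 < lam.parts 0
  · have h0 : i < lam.parts 0 := by omega
    rw [cextOf_of_lt _ _ h1, cextOf_of_lt _ _ h0]
    have ha := (hg ⟨i+1, h1⟩).2
    have hb := (hg ⟨i, h0⟩).1
    simp only at ha hb
    have he : i + 1 + 1 = i + 2 := rfl
    rw [he] at ha
    omega
  · rw [cextOf_of_ge _ _ (by omega)]
    omega

lemma muOf_conj {lam : Ptn} {g : Fin (lam.parts 0) → ℕ} (hg : goodg lam g) (i : ℕ) :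
    (muOf (lam.parts 0) g).conj (i+1) = cextOf (lam.parts 0) g i :=
  ofConj_conj (cext_anti hg) i

lemma muOf_size {lam : Ptn} {g : Fin (lam.parts 0) → ℕ} (hg : goodg lam g) :
    (muOf (lam.parts 0) g).size = ∑ i : Fin (lam.parts 0), g i := by
  rw [Ptn.size_eq_sum_conj _ (M := lam.parts 0)
    (fun i hi => by rw [muOf_conj hg, cextOf_of_ge _ _ hi])]
  rw [← Fin.sum_univ_eq_sum_range (fun i => (muOf (lam.parts 0) g).conj (i+1))]
  apply Finset.sum_congr rfl
  intro i _
  rw [muOf_conj hg, cextOf_of_lt _ _ i.isLt]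

lemma muOf_nstat {lam : Ptn} {g : Fin (lam.parts 0) → ℕ} (hg : goodg lam g) :
    (muOf (lam.parts 0) g).nstat = ∑ i : Fin (lam.parts 0), tri (g i) := by
  rw [Ptn.nstat_eq_sum_tri _ (M := lam.parts 0)
    (fun i hi => by rw [muOf_conj hg, cextOf_of_ge _ _ hi])]
  rw [← Fin.sum_univ_eq_sum_range (fun i => tri ((muOf (lam.parts 0) g).conj (i+1)))]
  apply Finset.sum_congr rfl
  intro i _
  rw [muOf_conj hg, cextOf_of_lt _ _ i.isLt]

lemma muOf_len {lam : Ptn} {g : Fin (lam.parts 0) → ℕ} (hg : goodg lam g)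
    (h0 : 0 < lam.parts 0) :
    (muOf (lam.parts 0) g).len = g ⟨0, h0⟩ := by
  rw [Ptn.len_eq_conj_one, show (1:ℕ) = 0 + 1 from rfl, muOf_conj hg, cextOf_of_lt _ _ h0]

lemma muOf_inj {lam : Ptn} {g g' : Fin (lam.parts 0) → ℕ}
    (hg : goodg lam g) (hg' : goodg lam g')
    (h : muOf (lam.parts 0) g = muOf (lam.parts 0) g') : g = g' := by
  funext i
  have h1 := muOf_conj hg (i : ℕ)
  have h2 := muOf_conj hg' (i : ℕ)
  rw [h] at h1
  rw [h1, cextOf_of_lt _ _ i.isLt, cextOf_of_lt _ _ i.isLt] at h2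
  simpa using h2

lemma good_mu_eq {lam mu : Ptn}
    (hmu : ∀ i : ℕ, lam.conj (i+2) ≤ mu.conj (i+1) ∧ mu.conj (i+1) ≤ lam.conj (i+1)) :
    goodg lam (fun i : Fin (lam.parts 0) => mu.conj ((i:ℕ)+1)) ∧
      muOf (lam.parts 0) (fun i : Fin (lam.parts 0) => mu.conj ((i:ℕ)+1)) = mu := by
  have hgg : goodg lam (fun i : Fin (lam.parts 0) => mu.conj ((i:ℕ)+1)) := fun i => hmu i
  refine ⟨hgg, ?_⟩
  apply Ptn.conj_ext
  intro i
  rw [muOf_conj hgg]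
  by_cases h : i < lam.parts 0
  · rw [cextOf_of_lt _ _ h]
  · rw [cextOf_of_ge _ _ (by omega)]
    have h1 := (hmu i).2
    have h2 : lam.conj (i+1) = 0 := lam.conj_eq_zero (by omega)
    omega

lemma Tf_muOf (q : ℚ) (lam : Ptn) {g : Fin (lam.parts 0) → ℕ} (hg : goodg lam g)
    (h0 : 0 < lam.parts 0) :
    Tf q lam (muOf (lam.parts 0) g)
      = q ^ (-((∑ i : Fin (lam.parts 0), NewtonAux.tri (g i)) : ℤ)) * qPoch q q (g ⟨0, h0⟩ - 1) *
        ∏ i : Fin (lam.parts 0), qBinomZ q⁻¹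
          ((lam.conj ((i:ℕ)+1) : ℤ) - (lam.conj ((i:ℕ)+2) : ℤ))
          ((lam.conj ((i:ℕ)+1) : ℤ) - (g i : ℤ)) := by
  have hp0 : (muOf (lam.parts 0) g).parts 0 ≤ lam.parts 0 := ofConj_parts0_le
  rw [Tf_eq_prod q lam (muOf (lam.parts 0) g) le_rfl hp0]
  rw [muOf_nstat hg, muOf_len hg h0, Nat.cast_sum]
  congr 1
  rw [← Fin.prod_univ_eq_prod_range (fun i => fac q lam (muOf (lam.parts 0) g) i)]
  apply Finset.prod_congr rfl
  intro i _
  rw [fac, muOf_conj hg, cextOf_of_lt _ _ i.isLt]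


lemma fin_sum_eq {M : Type*} [AddCommMonoid M] {L : ℕ} (hL1 : L = 1) (f : Fin L → M)
    (h0 : 0 < L) : ∑ i, f i = f ⟨0, h0⟩ := by
  subst hL1
  exact Fin.sum_univ_one f

lemma fin_prod_eq {M : Type*} [CommMonoid M] {L : ℕ} (hL1 : L = 1) (f : Fin L → M)
    (h0 : 0 < L) : ∏ i, f i = f ⟨0, h0⟩ := by
  subst hL1
  exact Fin.prod_univ_one f

end NewtonAux

open NewtonAux in
/-- Newton-type identity for Hall–Littlewood elements: for any rational
`q ∉ {0, ±1}` and any partition `λ` with `|λ| = n ≥ 1`,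
`Σ_{u=0}^{n−1} (−1)^u Σ_{|μ|=n−u} q^{−n(μ)} (q;q)_{ℓ(μ)−1}
   ∏_{i≥1} [λ'ᵢ−λ'_{i+1} choose λ'ᵢ−μ'ᵢ]_{1/q}`
equals `(−1)^{n−1} n` if `λ = (1^n)` and `0` otherwise. -/
theorem newton_identity (q : ℚ) (hq0 : q ≠ 0) (hq1 : q ≠ 1) (hqm1 : q ≠ -1)
    (n : ℕ) (hn : 1 ≤ n) (lam : Ptn) (hlam : lam.size = n) :
    (lam = Ptn.onePow n →
      ∑ u ∈ Finset.range n, (-1 : ℚ) ^ u *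
        ∑ᶠ (mu : Ptn) (_ : mu.size = n - u),
          q ^ (-(mu.nstat : ℤ)) * qPoch q q (mu.len - 1) *
            ∏ᶠ i : ℕ, qBinomZ q⁻¹
              ((lam.conj (i + 1) : ℤ) - (lam.conj (i + 2) : ℤ))
              ((lam.conj (i + 1) : ℤ) - (mu.conj (i + 1) : ℤ))
        = (-1 : ℚ) ^ (n - 1) * n) ∧
    (lam ≠ Ptn.onePow n →
      ∑ u ∈ Finset.range n, (-1 : ℚ) ^ u *
        ∑ᶠ (mu : Ptn) (_ : mu.size = n - u),
          q ^ (-(mu.nstat : ℤ)) * qPoch q q (mu.len - 1) *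
            ∏ᶠ i : ℕ, qBinomZ q⁻¹
              ((lam.conj (i + 1) : ℤ) - (lam.conj (i + 2) : ℤ))
              ((lam.conj (i + 1) : ℤ) - (mu.conj (i + 1) : ℤ))
        = 0) := by
  classical
  have htne1 : ∀ m : ℕ, 1 ≤ m → (q⁻¹) ^ m ≠ 1 := fun m hm =>
    NewtonAux.inv_pow_ne_one hq1 hqm1 hm
  have htP : ∀ m : ℕ, qPoch q⁻¹ q⁻¹ m ≠ 0 := fun m => NewtonAux.qPoch_ne_zero htne1 m
  have hconjL : ∀ i, lam.parts 0 ≤ i → lam.conj (i+1) = 0 := fun i hi =>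
    lam.conj_eq_zero (by omega)
  have hsumc : ∑ i ∈ Finset.range (lam.parts 0), lam.conj (i+1) = n := by
    rw [← lam.size_eq_sum_conj hconjL, hlam]
  have hL0 : 0 < lam.parts 0 := by
    by_contra h
    have h0 : lam.parts 0 = 0 := by omega
    rw [h0] at hsumc
    simp at hsumc
    omega
  set TT : Finset (Fin (lam.parts 0) → ℕ) :=
    Fintype.piFinset (fun i => Finset.Icc (lam.conj ((i:ℕ)+2)) (lam.conj ((i:ℕ)+1))) with hTT
  have hmemTT : ∀ g, g ∈ TT ↔ NewtonAux.goodg lam g := by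
    intro g
    rw [hTT, Fintype.mem_piFinset]
    apply forall_congr'
    intro i
    rw [Finset.mem_Icc]
  have hgle : ∀ g ∈ TT, ∑ i, g i ≤ n := by
    intro g hg
    rw [← hsumc, ← Fin.sum_univ_eq_sum_range (fun i => lam.conj (i+1))]
    apply Finset.sum_le_sum
    intro i _
    exact (((hmemTT g).1 hg) i).2
  -- evaluation of the inner finsum
  have inner : ∀ u, u < n →
      (∑ᶠ (mu : Ptn) (_ : mu.size = n - u), NewtonAux.Tf q lam mu)
        = ∑ g ∈ TT.filter (fun g => ∑ i, g i = n - u),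
            NewtonAux.Tf q lam (NewtonAux.muOf (lam.parts 0) g) := by
    intro u hu
    have h1 : (∑ᶠ (mu : Ptn) (_ : mu.size = n - u), NewtonAux.Tf q lam mu)
        = ∑ᶠ (mu : Ptn), (if mu.size = n - u then NewtonAux.Tf q lam mu else 0) := by
      apply finsum_congr
      intro mu
      exact finsum_eq_if
    have hsupp : Function.support
        (fun mu => if mu.size = n - u then NewtonAux.Tf q lam mu else 0)
        ⊆ ↑((TT.filter (fun g => ∑ i, g i = n - u)).image (NewtonAux.muOf (lam.parts 0))) := by
      intro mu hmu
      simp only [Function.mem_support] at hmu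
      have hsz : mu.size = n - u := by
        by_contra h
        rw [if_neg h] at hmu
        exact hmu rfl
      rw [if_pos hsz] at hmu
      have hgood : ∀ i : ℕ, lam.conj (i+2) ≤ mu.conj (i+1) ∧ mu.conj (i+1) ≤ lam.conj (i+1) := by
        by_contra hcon
        push_neg at hcon
        obtain ⟨i, hi⟩ := hcon
        apply hmu
        apply NewtonAux.Tf_eq_zero_of_bad
        refine ⟨i, fun hc => ?_⟩
        have := hi hc.1
        omega
      obtain ⟨hgg, hmeq⟩ := NewtonAux.good_mu_eq hgood
      simp only [Finset.coe_image, Set.mem_image, Finset.mem_coe, Finset.mem_filter]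
      refine ⟨_, ⟨(hmemTT _).2 hgg, ?_⟩, hmeq⟩
      have := NewtonAux.muOf_size hgg
      rw [hmeq, hsz] at this
      exact this.symm
    rw [h1, finsum_eq_sum_of_support_subset _ hsupp]
    rw [Finset.sum_image ?hinj]
    case hinj =>
      intro g hgm g' hgm' heq
      simp only [Finset.mem_coe, Finset.mem_filter] at hgm hgm'
      exact NewtonAux.muOf_inj ((hmemTT g).1 hgm.1) ((hmemTT g').1 hgm'.1) heq
    apply Finset.sum_congr rfl
    intro g hgf
    simp only [Finset.mem_filter] at hgf
    rw [if_pos]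
    rw [NewtonAux.muOf_size ((hmemTT g).1 hgf.1), hgf.2]
  -- the combined sum
  have main : ∑ u ∈ Finset.range n, (-1:ℚ)^u *
      ∑ᶠ (mu : Ptn) (_ : mu.size = n - u), NewtonAux.Tf q lam mu
        = ∑ g ∈ TT.filter (fun g => 1 ≤ ∑ i, g i),
            ((-1:ℚ)^(n - ∑ i, g i) * NewtonAux.Tf q lam (NewtonAux.muOf (lam.parts 0) g)) := by
    have step1 : ∀ u ∈ Finset.range n,
        (-1:ℚ)^u * ∑ᶠ (mu : Ptn) (_ : mu.size = n - u), NewtonAux.Tf q lam mu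
          = ∑ g ∈ (TT.filter (fun g => 1 ≤ ∑ i, g i)).filter (fun g => n - ∑ i, g i = u),
              ((-1:ℚ)^(n - ∑ i, g i) * NewtonAux.Tf q lam (NewtonAux.muOf (lam.parts 0) g)) := by
      intro u hu
      simp only [Finset.mem_range] at hu
      rw [inner u hu, Finset.mul_sum]
      rw [Finset.filter_filter]
      have hfe : TT.filter (fun g => ∑ i, g i = n - u)
          = TT.filter (fun g => (1 ≤ ∑ i, g i) ∧ n - ∑ i, g i = u) := by
        apply Finset.filter_congr
        intro g hgm
        have := hgle g hgm
        constructor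
        · intro h; omega
        · intro h; omega
      rw [← hfe]
      apply Finset.sum_congr rfl
      intro g hgf
      simp only [Finset.mem_filter] at hgf
      rw [show n - ∑ i, g i = u by omega]
    rw [Finset.sum_congr rfl step1]
    exact Finset.sum_fiberwise_of_maps_to (fun g hgm => by
      simp only [Finset.mem_filter] at hgm
      have := hgle g hgm.1
      simp only [Finset.mem_range]
      omega) _
  refine ⟨?_, ?_⟩
  · -- λ = (1^n)
    intro hone
    have hL1 : lam.parts 0 = 1 := by
      rw [hone]
      show (if (0:ℕ) < n then 1 else 0) = 1
      rw [if_pos (by omega)]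
    have hc1 : lam.conj 1 = n := by
      rw [hL1] at hsumc
      simpa using hsumc
    have hc2 : lam.conj 2 = 0 := lam.conj_eq_zero (by omega)
    show (∑ u ∈ Finset.range n, (-1:ℚ)^u *
      ∑ᶠ (mu : Ptn) (_ : mu.size = n - u), NewtonAux.Tf q lam mu) = (-1:ℚ)^(n-1) * n
    rw [main]
    have hfin : ∑ g ∈ TT.filter (fun g => 1 ≤ ∑ i, g i),
        ((-1:ℚ)^(n - ∑ i, g i) * NewtonAux.Tf q lam (NewtonAux.muOf (lam.parts 0) g))
          = ∑ j ∈ Finset.Icc 1 n,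
              ((-1:ℚ)^(n-1) * (qPoch q⁻¹ q⁻¹ (j-1) * qBinom q⁻¹ n j)) := by
      have hSum : ∀ f : Fin (lam.parts 0) → ℕ, ∑ i, f i = f ⟨0, hL0⟩ :=
        fun f => NewtonAux.fin_sum_eq hL1 f hL0
      apply Finset.sum_bij' (i := fun g _ => g ⟨0, hL0⟩)
        (j := fun j _ => fun _ : Fin (lam.parts 0) => j)
      case hi =>
        intro g hgm
        simp only [Finset.mem_filter] at hgm
        have hmem := (hmemTT g).1 hgm.1
        have h2 := (hmem ⟨0, hL0⟩).2
        simp only [Fin.val_mk, Nat.zero_add] at h2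
        rw [hc1] at h2
        have hsum1 := hSum g
        rw [Finset.mem_Icc]
        omega
      case hj =>
        intro j hj
        simp only [Finset.mem_Icc] at hj
        simp only [Finset.mem_filter]
        refine ⟨(hmemTT _).2 ?_, ?_⟩
        · intro i
          have hi0 : (i:ℕ) = 0 := by have := i.isLt; omega
          rw [hi0]
          simp only [Nat.zero_add]
          rw [hc2, hc1]
          omega
        · rw [hSum]
          omega
      case left_neg =>
        intro g hgm
        funext i
        have : i = ⟨0, hL0⟩ := by
          apply Fin.ext
          have := i.isLt
          simp only [Fin.val_mk]
          omega
        rw [this]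
      case right_neg =>
        intro j hj
        rfl
      case h =>
        intro g hgm
        simp only [Finset.mem_filter] at hgm
        have hgg := (hmemTT g).1 hgm.1
        have hj2 := (hgg ⟨0, hL0⟩).2
        simp only [Fin.val_mk, Nat.zero_add] at hj2
        rw [hc1] at hj2
        have hsum1 := hSum g
        have hj1 : 1 ≤ g ⟨0, hL0⟩ := by
          have := hgm.2
          omega
        rw [NewtonAux.Tf_muOf q lam hgg hL0]
        have hnst : (∑ i : Fin (lam.parts 0), ((NewtonAux.tri (g i)) : ℤ))
            = ((NewtonAux.tri (g ⟨0, hL0⟩)) : ℤ) := by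
          rw [← Nat.cast_sum]
          exact congrArg (fun m : ℕ => (m : ℤ)) (hSum (fun i => NewtonAux.tri (g i)))
        rw [hnst]
        have hprd : (∏ i : Fin (lam.parts 0), qBinomZ q⁻¹
              ((lam.conj ((i:ℕ)+1):ℤ) - (lam.conj ((i:ℕ)+2):ℤ))
              ((lam.conj ((i:ℕ)+1):ℤ) - (g i : ℤ)))
            = qBinom q⁻¹ n (g ⟨0, hL0⟩) := by
          rw [NewtonAux.fin_prod_eq hL1 _ hL0]
          simp only [Fin.val_mk, Nat.zero_add, hc1, hc2, Nat.cast_zero, sub_zero]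
          exact NewtonAux.qBinomZ_eq_qBinom q⁻¹ hj2
        rw [hprd]
        have htri := NewtonAux.q_pow_neg_tri q hq0 (g ⟨0, hL0⟩ - 1)
        rw [show g ⟨0, hL0⟩ - 1 + 1 = g ⟨0, hL0⟩ by omega] at htri
        rw [hsum1]
        calc (-1:ℚ)^(n - g ⟨0, hL0⟩) *
              (q ^ (-(NewtonAux.tri (g ⟨0, hL0⟩) : ℤ)) * qPoch q q (g ⟨0, hL0⟩ - 1) *
                qBinom q⁻¹ n (g ⟨0, hL0⟩))
            = (-1:ℚ)^(n - g ⟨0, hL0⟩) *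
              (((-1:ℚ)^(g ⟨0, hL0⟩ - 1) * qPoch q⁻¹ q⁻¹ (g ⟨0, hL0⟩ - 1)) *
                qBinom q⁻¹ n (g ⟨0, hL0⟩)) := by rw [htri]
          _ = ((-1:ℚ)^(n - g ⟨0, hL0⟩) * (-1:ℚ)^(g ⟨0, hL0⟩ - 1)) *
              (qPoch q⁻¹ q⁻¹ (g ⟨0, hL0⟩ - 1) * qBinom q⁻¹ n (g ⟨0, hL0⟩)) := by ring
          _ = (-1:ℚ)^(n-1) *
              (qPoch q⁻¹ q⁻¹ (g ⟨0, hL0⟩ - 1) * qBinom q⁻¹ n (g ⟨0, hL0⟩)) := by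
                rw [← pow_add, show n - g ⟨0, hL0⟩ + (g ⟨0, hL0⟩ - 1) = n - 1 by omega]
    rw [hfin, ← Finset.mul_sum]
    congr 1
    rw [← Finset.Ico_add_one_right_eq_Icc, Finset.sum_Ico_eq_sum_range,
      show n + 1 - 1 = n from rfl]
    rw [← NewtonAux.newton_scalar htP n]
    apply Finset.sum_congr rfl
    intro i _
    rw [show 1 + i - 1 = i by omega, add_comm 1 i]
  · -- λ ≠ (1^n)
    intro hne
    have hL2 : 2 ≤ lam.parts 0 := by
      by_contra hcon
      have hL1 : lam.parts 0 = 1 := by omega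
      apply hne
      apply Ptn.ptn_ext
      funext j
      have hc1 : lam.conj 1 = n := by
        rw [hL1] at hsumc
        simpa using hsumc
      have hiff := lam.lt_conj_iff 0 j
      simp only [Nat.zero_add] at hiff
      rw [hc1] at hiff
      have hple : lam.parts j ≤ lam.parts 0 := lam.parts_le j
      show lam.parts j = (if j < n then 1 else 0)
      split_ifs with hcase
      · omega
      · omega
    show (∑ u ∈ Finset.range n, (-1:ℚ)^u *
      ∑ᶠ (mu : Ptn) (_ : mu.size = n - u), NewtonAux.Tf q lam mu) = 0
    rw [main]
    have hfeq : TT.filter (fun g => 1 ≤ ∑ i, g i) = TT := by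
      apply Finset.filter_true_of_mem
      intro g hgm
      have h1 := ((hmemTT g).1 hgm ⟨0, hL0⟩).1
      simp only [Fin.val_mk, Nat.zero_add] at h1
      have h2 : 0 < lam.conj 2 := by
        have := (lam.lt_conj_iff 1 0).2 hL2
        simpa using this
      have h3 : g ⟨0, hL0⟩ ≤ ∑ i, g i :=
        Finset.single_le_sum (fun i _ => Nat.zero_le _) (Finset.mem_univ _)
      omega
    rw [hfeq]
    set F : Fin (lam.parts 0) → ℕ → ℚ := fun i v =>
      (-1:ℚ)^v * ((q⁻¹)^(NewtonAux.tri v) *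
        ((if i = (⟨0, hL0⟩ : Fin (lam.parts 0)) then qPoch q q (v-1) else 1) *
          qBinomZ q⁻¹ ((lam.conj ((i:ℕ)+1):ℤ) - (lam.conj ((i:ℕ)+2):ℤ))
            ((lam.conj ((i:ℕ)+1):ℤ) - (v:ℤ)))) with hF
    have hterm : ∀ g ∈ TT,
        (-1:ℚ)^(n - ∑ i, g i) * NewtonAux.Tf q lam (NewtonAux.muOf (lam.parts 0) g)
          = (-1:ℚ)^n * ∏ i : Fin (lam.parts 0), F i (g i) := by
      intro g hgm
      have hgg := (hmemTT g).1 hgm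
      have hs1 : ((-1:ℚ))^(∑ i, g i) = ∏ i : Fin (lam.parts 0), (-1:ℚ)^(g i) :=
        (Finset.prod_pow_eq_pow_sum _ _ _).symm
      have hs2 : q ^ (-((∑ i : Fin (lam.parts 0), NewtonAux.tri (g i)) : ℤ))
          = ∏ i : Fin (lam.parts 0), (q⁻¹)^(NewtonAux.tri (g i)) := by
        rw [← Nat.cast_sum, NewtonAux.zpow_neg_natCast, ← Finset.prod_pow_eq_pow_sum]
      have hpq : qPoch q q (g ⟨0, hL0⟩ - 1)
          = ∏ i : Fin (lam.parts 0), (if i = (⟨0, hL0⟩ : Fin (lam.parts 0)) then qPoch q q (g i - 1) else 1) := by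
        rw [Finset.prod_ite_eq' Finset.univ (⟨0, hL0⟩ : Fin (lam.parts 0))
          (fun i => qPoch q q (g i - 1))]
        rw [if_pos (Finset.mem_univ _)]
      rw [NewtonAux.Tf_muOf q lam hgg hL0]
      rw [NewtonAux.neg_one_pow_sub (hgle g hgm)]
      calc ((-1:ℚ)^n * (-1:ℚ)^(∑ i, g i)) *
            (q ^ (-((∑ i : Fin (lam.parts 0), NewtonAux.tri (g i)) : ℤ)) * qPoch q q (g ⟨0, hL0⟩ - 1) *
              ∏ i : Fin (lam.parts 0), qBinomZ q⁻¹ ((lam.conj ((i:ℕ)+1):ℤ) - (lam.conj ((i:ℕ)+2):ℤ))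
                ((lam.conj ((i:ℕ)+1):ℤ) - (g i : ℤ)))
          = (-1:ℚ)^n * ((-1:ℚ)^(∑ i, g i) *
              (q ^ (-((∑ i : Fin (lam.parts 0), NewtonAux.tri (g i)) : ℤ)) *
                (qPoch q q (g ⟨0, hL0⟩ - 1) *
                  ∏ i : Fin (lam.parts 0), qBinomZ q⁻¹ ((lam.conj ((i:ℕ)+1):ℤ) - (lam.conj ((i:ℕ)+2):ℤ))
                    ((lam.conj ((i:ℕ)+1):ℤ) - (g i : ℤ))))) := by ring
        _ = (-1:ℚ)^n * ((∏ i : Fin (lam.parts 0), (-1:ℚ)^(g i)) *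
              ((∏ i : Fin (lam.parts 0), (q⁻¹)^(NewtonAux.tri (g i))) *
                ((∏ i : Fin (lam.parts 0), (if i = (⟨0, hL0⟩ : Fin (lam.parts 0)) then qPoch q q (g i - 1) else 1)) *
                  ∏ i : Fin (lam.parts 0), qBinomZ q⁻¹ ((lam.conj ((i:ℕ)+1):ℤ) - (lam.conj ((i:ℕ)+2):ℤ))
                    ((lam.conj ((i:ℕ)+1):ℤ) - (g i : ℤ))))) := by
            rw [hs1, hs2, hpq]
        _ = (-1:ℚ)^n * ∏ i : Fin (lam.parts 0), F i (g i) := by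
            rw [← Finset.prod_mul_distrib, ← Finset.prod_mul_distrib,
              ← Finset.prod_mul_distrib]
    rw [Finset.sum_congr rfl hterm, ← Finset.mul_sum]
    rw [hTT, ← Finset.prod_univ_sum
      (fun i : Fin (lam.parts 0) => Finset.Icc (lam.conj ((i:ℕ)+2)) (lam.conj ((i:ℕ)+1))) F]
    have hkill : ∑ v ∈ Finset.Icc
        (lam.conj (((⟨lam.parts 0 - 1, by omega⟩ : Fin (lam.parts 0)):ℕ)+2))
        (lam.conj (((⟨lam.parts 0 - 1, by omega⟩ : Fin (lam.parts 0)):ℕ)+1)),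
        F (⟨lam.parts 0 - 1, by omega⟩ : Fin (lam.parts 0)) v = 0 := by
      simp only [Fin.val_mk]
      have e2 : lam.parts 0 - 1 + 2 = lam.parts 0 + 1 := by omega
      have e1 : lam.parts 0 - 1 + 1 = lam.parts 0 := by omega
      rw [e2, e1]
      have hc2' : lam.conj (lam.parts 0 + 1) = 0 := lam.conj_eq_zero (by omega)
      have ha : 1 ≤ lam.conj (lam.parts 0) := by
        have h := (lam.lt_conj_iff (lam.parts 0 - 1) 0).2 (by omega)
        rw [e1] at h
        omega
      rw [hc2']
      obtain ⟨b, hb⟩ : ∃ b, lam.conj (lam.parts 0) = b + 1 :=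
        ⟨lam.conj (lam.parts 0) - 1, by omega⟩
      have hIcc : Finset.Icc 0 (lam.conj (lam.parts 0)) = Finset.range (b+2) := by
        ext x
        simp only [Finset.mem_Icc, Finset.mem_range]
        omega
      rw [hIcc]
      rw [← NewtonAux.alt_qbinom_sum htP b]
      apply Finset.sum_congr rfl
      intro v hv
      simp only [Finset.mem_range] at hv
      simp only [hF, Fin.val_mk, e1, e2, hc2']
      rw [if_neg (by
        intro hc
        have := congrArg (fun x : Fin (lam.parts 0) => (x : ℕ)) hc
        simp only [Fin.val_mk] at this
        omega)]
      rw [show ((0:ℕ):ℤ) = 0 from rfl, sub_zero]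
      rw [hb]
      rw [NewtonAux.qBinomZ_eq_qBinom q⁻¹ (show v ≤ b+1 by omega)]
      ring
    rw [Finset.prod_eq_zero (Finset.mem_univ (⟨lam.parts 0 - 1, by omega⟩ : Fin (lam.parts 0))) hkill,
      mul_zero]
end

section
/- For every integer n ≥ 1, the polynomial identity Σ_{u=1}^{n} [n choose u]_t · (t;t)_{u−1} = n holds in ℤ[t]. -/
open scoped BigOperators

local notation "t" => (RatFunc.X : RatFunc ℚ)

lemma qPoch_succ {K : Type*} [CommRing K] (x s : K) (m : ℕ) :
    qPoch x s (m+1) = qPoch x s m * (1 - x * s ^ m) := Finset.prod_range_succ _ _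

lemma one_sub_ne (j : ℕ) : (1 - t * t ^ j : RatFunc ℚ) ≠ 0 := by
  have h : (1 - t * t ^ j : RatFunc ℚ)
      = algebraMap (Polynomial ℚ) (RatFunc ℚ) (1 - Polynomial.X ^ (j+1)) := by
    simp [map_sub, map_pow, RatFunc.algebraMap_X, pow_succ, mul_comm]
  rw [h]
  intro hc
  have h0 : (1 - Polynomial.X ^ (j+1) : Polynomial ℚ) = 0 :=
    (RatFunc.algebraMap_injective ℚ) (by simpa using hc)
  have := congrArg (fun p => Polynomial.coeff p (j+1)) h0
  simp [Polynomial.coeff_one] at this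

lemma P_ne (m : ℕ) : qPoch t t m ≠ 0 :=
  Finset.prod_ne_zero_iff.2 fun i _ => one_sub_ne i

lemma recsum (m : ℕ) :
    ∑ j ∈ Finset.range (m+1), t ^ j / qPoch t t j = 1 / qPoch t t m := by
  induction m with
  | zero => simp [qPoch]
  | succ m ih =>
      rw [Finset.sum_range_succ, ih, qPoch_succ]
      have h1 := P_ne m
      have h2 := one_sub_ne m
      field_simp
      ring

lemma Tlem (m : ℕ) :
    ∑ v ∈ Finset.range (m+1), t ^ (m-v) * (qPoch t t m / qPoch t t (m-v)) = 1 := by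
  have hr := Finset.sum_range_reflect (fun j => t ^ j * (qPoch t t m / qPoch t t j)) (m+1)
  calc ∑ v ∈ Finset.range (m+1), t ^ (m-v) * (qPoch t t m / qPoch t t (m-v))
      = ∑ j ∈ Finset.range (m+1), t ^ j * (qPoch t t m / qPoch t t j) := by
        rw [← hr]; apply Finset.sum_congr rfl; intro v hv
        simp only [Finset.mem_range] at hv
        have : m + 1 - 1 - v = m - v := by omega
        rw [this]
    _ = qPoch t t m * ∑ j ∈ Finset.range (m+1), t ^ j / qPoch t t j := by
        rw [Finset.mul_sum]; apply Finset.sum_congr rfl; intro j _; ring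
    _ = 1 := by rw [recsum]; field_simp [P_ne m]

lemma pascal (n u : ℕ) (hu : 1 ≤ u) (hun : u ≤ n+1) :
    qBinom t (n+1) u = qBinom t n u + t ^ (n+1-u) * qBinom t n (u-1) := by
  rcases Nat.lt_or_ge n u with h | h
  · have hu' : u = n + 1 := le_antisymm hun h
    subst hu'
    rw [qBinom, qBinom, qBinom, if_pos le_rfl, if_neg (by omega), if_pos (by omega : n+1-1 ≤ n)]
    rw [(by omega : n + 1 - 1 = n)]
    simp only [Nat.sub_self, qPoch, Finset.range_zero, Finset.prod_empty, pow_zero]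
    rw [mul_one, mul_one, zero_add, one_mul,
      div_self (by simpa [qPoch] using P_ne (n+1)), div_self (by simpa [qPoch] using P_ne n)]
  · obtain ⟨i, rfl⟩ : ∃ i, u = i + 1 := ⟨u - 1, by omega⟩
    obtain ⟨j, rfl⟩ : ∃ j, n = i + 1 + j := ⟨n - (i+1), by omega⟩
    rw [qBinom, qBinom, qBinom, if_pos (by omega), if_pos (by omega), if_pos (by omega)]
    rw [(by omega : i + 1 + j + 1 - (i + 1) = j + 1),
        (by omega : i + 1 + j - (i + 1) = j),
        (by omega : i + 1 - 1 = i),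
        (by omega : i + 1 + j - i = j + 1),
        (by omega : i + 1 + j + 1 = (i + 1 + j) + 1),
        qPoch_succ t t (i+1+j), qPoch_succ t t j, qPoch_succ t t i]
    have hpn := P_ne (i+1+j)
    have hpu := P_ne i
    have hpj := P_ne j
    have ha := one_sub_ne (i+1+j)
    have hb := one_sub_ne j
    have hc := one_sub_ne i
    field_simp
    ring

lemma icc_to_range (f : ℕ → RatFunc ℚ) (m : ℕ) :
    ∑ u ∈ Finset.Icc 1 m, f u = ∑ v ∈ Finset.range m, f (1 + v) := by
  rw [← Finset.Ico_add_one_right_eq_Icc, Finset.sum_Ico_eq_sum_range]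
  simp

lemma Slem (n : ℕ) :
    ∑ u ∈ Finset.Icc 1 n, qBinom t n u * qPoch t t (u - 1) = (n : RatFunc ℚ) := by
  induction n with
  | zero => simp
  | succ n ih =>
      have hstep : ∀ u ∈ Finset.Icc 1 (n+1),
          qBinom t (n+1) u * qPoch t t (u-1)
            = qBinom t n u * qPoch t t (u-1)
              + t ^ (n+1-u) * qBinom t n (u-1) * qPoch t t (u-1) := by
        intro u hu
        simp only [Finset.mem_Icc] at hu
        rw [pascal n u hu.1 hu.2]
        ring
      rw [Finset.sum_congr rfl hstep, Finset.sum_add_distrib]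
      have h1 : ∑ u ∈ Finset.Icc 1 (n+1), qBinom t n u * qPoch t t (u-1)
          = (n : RatFunc ℚ) := by
        rw [icc_to_range, Finset.sum_range_succ]
        rw [icc_to_range] at ih
        have hz : qBinom t n (1 + n) = 0 := by rw [qBinom, if_neg (by omega)]
        rw [hz, ih]; ring
      have h2 : ∑ u ∈ Finset.Icc 1 (n+1),
          t ^ (n+1-u) * qBinom t n (u-1) * qPoch t t (u-1) = 1 := by
        rw [icc_to_range, ← Tlem n]
        apply Finset.sum_congr rfl
        intro v hv
        simp only [Finset.mem_range] at hv
        have e1 : n + 1 - (1 + v) = n - v := by omega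
        have e2 : 1 + v - 1 = v := by omega
        rw [e1, e2, qBinom, if_pos (by omega : v ≤ n)]
        have hv' := P_ne v
        have hnv := P_ne (n - v)
        field_simp
      rw [h1, h2]
      push_cast
      ring

/-- for every `n ≥ 1`, `Σ_{u=1}^{n} [n choose u]_t · (t;t)_{u−1} = n`
(an identity of polynomials in `t`, stated in the field `ℚ(t)` of rational functions,
in which `ℤ[t]` embeds). -/
theorem qbinom_sum_identity (n : ℕ) (hn : 1 ≤ n) :
    ∑ u ∈ Finset.Icc 1 n,
        qBinom (RatFunc.X : RatFunc ℚ) n u *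
          qPoch (RatFunc.X : RatFunc ℚ) (RatFunc.X : RatFunc ℚ) (u - 1)
      = (n : RatFunc ℚ) := Slem n
end
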